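/- In the free group F₂ on generators a, b, with respect to the generating set S_α = {a, a⁻¹, b, b⁻¹}, every non-identity element g satisfies κ(g) = −1/|g|. -/

import Mathlib

section Defs

variable {G : Type*} [Group G]

/-- Word length with respect to a generating set `S`: the least `n` such that `g`
is a product of `n` elements of `S`. -/
noncomputable def wlen (S : Set G) (g : G) : ℕ :=
  sInf {n | ∃ l : List G, (∀ x ∈ l, x ∈ S) ∧ l.length = n ∧ l.prod = g}

/-- Word metric: `d(g,h) = |h⁻¹ g|`. -/
noncomputable def wdist (S : Set G) (x y : G) : ℝ := wlen S (y⁻¹ * x)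

/-- Gromov product `(x,y)_w = ½ (d(x,w) + d(w,y) − d(x,y))`. -/
noncomputable def gp (S : Set G) (x y w : G) : ℝ :=
  (wdist S x w + wdist S w y - wdist S x y) / 2

/-- The word metric is `δ`-hyperbolic (Gromov's four-point condition). -/
def IsDeltaHyperbolic (S : Set G) (δ : ℝ) : Prop :=
  ∀ x y z w : G, gp S x y w ≥ min (gp S x z w) (gp S y z w) - δ

/-- A group is virtually cyclic if it has a cyclic subgroup of finite index. -/
def VirtuallyCyclic (G : Type*) [Group G] : Prop :=
  ∃ H : Subgroup G, IsCyclic H ∧ H.FiniteIndex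

/-- `GenCon(g)`: the average word length of the conjugates of `g`
by the generators in `S`. -/
noncomputable def genCon (S : Set G) (g : G) : ℝ :=
  (∑ᶠ s ∈ S, (wlen S (s⁻¹ * g * s) : ℝ)) / S.ncard

/-- Conjugation curvature `κ(g) = (|g| − GenCon(g)) / |g|`. -/
noncomputable def kappa (S : Set G) (g : G) : ℝ :=
  ((wlen S g : ℝ) - genCon S g) / (wlen S g)

/-- `k`-spherical conjugation curvature
`κ_k(g) = (|g| − (1/#S_k) Σ_{s ∈ S_k} d(gs,s)) / |g|`; note `d(gs,s) = |s⁻¹ g s|`. -/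
noncomputable def kappaK (S : Set G) (k : ℕ) (g : G) : ℝ :=
  ((wlen S g : ℝ) -
      (∑ᶠ s ∈ {x : G | wlen S x = k}, (wlen S (s⁻¹ * g * s) : ℝ)) /
        ({x : G | wlen S x = k} : Set G).ncard) / (wlen S g)

end Defs


namespace FreeGroup
variable {α : Type*} [DecidableEq α]

set_option linter.unusedSectionVars false

lemma invRev_cons' (x : α × Bool) (W : List (α × Bool)) :
    invRev (x :: W) = invRev W ++ [(x.1, !x.2)] := by simp [invRev]

lemma invRev_concat (x : α × Bool) (W : List (α × Bool)) :
    invRev (W ++ [x]) = (x.1, !x.2) :: invRev W := by simp [invRev]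

lemma tail_invRev (L : List (α × Bool)) : (invRev L).tail = invRev L.dropLast := by
  simp [invRev, List.tail_reverse, List.map_dropLast]

lemma head?_invRev (L : List (α × Bool)) :
    (invRev L).head? = L.getLast?.map (fun p => (p.1, !p.2)) := by
  simp [invRev, List.head?_reverse, List.getLast?_map]

lemma reduce_cons_of_not_cancel' (x : α × Bool) {W M : List (α × Bool)}
    (h : reduce W = M) (hc : ∀ hd ∈ M.head?, ¬(x.1 = hd.1 ∧ x.2 = !hd.2)) :
    reduce (x :: W) = x :: M := by
  rw [reduce.cons, h]
  cases M with
  | nil => rfl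
  | cons hd tl => simp only; rw [if_neg (hc hd rfl)]

lemma reduce_cons_of_cancel' (x hd : α × Bool) {W tl : List (α × Bool)}
    (h : reduce W = hd :: tl) (hc : x.1 = hd.1 ∧ x.2 = !hd.2) :
    reduce (x :: W) = tl := by
  rw [reduce.cons, h]; simp only; rw [if_pos hc]

lemma reduce_cons_of_not_cancel (x : α × Bool) {L : List (α × Bool)}
    (h : reduce L = L) (hc : ∀ hd ∈ L.head?, ¬(x.1 = hd.1 ∧ x.2 = !hd.2)) :
    reduce (x :: L) = x :: L := reduce_cons_of_not_cancel' x h hc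

lemma reduce_cons_of_cancel (x hd : α × Bool) {tl : List (α × Bool)}
    (h : reduce (hd :: tl) = hd :: tl) (hc : x.1 = hd.1 ∧ x.2 = !hd.2) :
    reduce (x :: hd :: tl) = tl := reduce_cons_of_cancel' x hd h hc

lemma reduce_concat_eq (x : α × Bool) (L : List (α × Bool)) :
    reduce (L ++ [x]) = invRev (reduce ((x.1, !x.2) :: invRev L)) := by
  rw [← invRev_concat, reduce_invRev, invRev_invRev]

lemma reduce_invRev_self {L : List (α × Bool)} (h : reduce L = L) :
    reduce (invRev L) = invRev L := by rw [reduce_invRev, h]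

/-- appending a letter: non-cancelling case. -/
lemma reduce_concat_ne (x : α × Bool) {L : List (α × Bool)}
    (h : reduce L = L) (hc : L.getLast? ≠ some (x.1, !x.2)) :
    reduce (L ++ [x]) = L ++ [x] := by
  rw [reduce_concat_eq]
  rw [reduce_cons_of_not_cancel _ (reduce_invRev_self h), invRev_cons', invRev_invRev]
  · simp
  · intro hd hhd hcon
    rw [head?_invRev] at hhd
    rcases L.getLast?.eq_none_or_eq_some with h0 | ⟨p, hp⟩
    · rw [h0] at hhd; simp at hhd
    · obtain ⟨p1, p2⟩ := p
      rw [hp] at hhd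
      apply hc
      rw [hp]
      obtain ⟨h1, h2⟩ := hcon
      obtain rfl : (p1, !p2) = hd := by simpa using hhd
      simp only at h1 h2
      simp only [Bool.not_not] at h2
      simp [← h1, ← h2]

/-- appending a letter: cancelling case. -/
lemma reduce_concat_cancel (x : α × Bool) {L : List (α × Bool)}
    (h : reduce L = L) (hc : L.getLast? = some (x.1, !x.2)) :
    reduce (L ++ [x]) = L.dropLast := by
  rw [reduce_concat_eq]
  have hLne : L ≠ [] := by rintro rfl; simp at hc
  have hne : invRev L ≠ [] := by
    intro h0
    have := congrArg List.length h0
    rw [invRev_length] at this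
    exact hLne (List.length_eq_zero_iff.mp this)
  obtain ⟨hd, tl, hL⟩ := List.exists_cons_of_ne_nil hne
  have hhd : hd = (x.1, x.2) := by
    have h2 := head?_invRev L
    rw [hL, hc] at h2
    simp at h2
    simpa using h2
  rw [hL, reduce_cons_of_cancel _ hd (by rw [← hL]; exact reduce_invRev_self h) (by simp [hhd])]
  have htl : tl = (invRev L).tail := by rw [hL]; rfl
  rw [htl, tail_invRev, invRev_invRev]

end FreeGroup

namespace FreeGroup
variable {α : Type*} [DecidableEq α]

set_option linter.unusedSectionVars false
set_option maxHeartbeats 1000000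

lemma toWord_conj (ℓ : α × Bool) (g : FreeGroup α) :
    ((mk [ℓ])⁻¹ * g * mk [ℓ]).toWord = reduce ((ℓ.1, !ℓ.2) :: (g.toWord ++ [ℓ])) := by
  conv_lhs => rw [← mk_toWord (x := g)]
  rw [inv_mk, mul_mk, mul_mk, toWord_mk]
  congr 1

lemma norm_conj (ℓ : α × Bool) (g : FreeGroup α) (hg : g ≠ 1) :
    (norm ((mk [ℓ])⁻¹ * g * mk [ℓ]) : ℝ) =
      (norm g : ℝ) + 2 - (if g.toWord.head? = some ℓ then 2 else 0)
        - (if g.toWord.getLast? = some (ℓ.1, !ℓ.2) then 2 else 0) := by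
  have hred : reduce g.toWord = g.toWord := reduce_toWord g
  have hne : g.toWord ≠ [] := by simpa [toWord_eq_nil_iff] using hg
  have hnorm : norm g = g.toWord.length := rfl
  have hnormc : norm ((mk [ℓ])⁻¹ * g * mk [ℓ]) =
      (reduce ((ℓ.1, !ℓ.2) :: (g.toWord ++ [ℓ]))).length := by
    rw [← toWord_conj]; rfl
  set L := g.toWord with hL
  have hlen1 : 1 ≤ L.length := List.length_pos_iff.mpr hne
  by_cases hlast : L.getLast? = some (ℓ.1, !ℓ.2)
  · have hM : reduce (L ++ [ℓ]) = L.dropLast := by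
      apply reduce_concat_cancel _ hred
      simpa using hlast
    by_cases hhead : L.head? = some ℓ
    · -- both cancel; length ≥ 2
      have hlen2 : 2 ≤ L.length := by
        rcases Nat.lt_or_ge L.length 2 with h2 | h2
        · exfalso
          have h1' : L.length = 1 := by omega
          obtain ⟨x, hx⟩ := List.length_eq_one_iff.mp h1'
          rw [hx] at hhead hlast
          simp only [List.head?_cons, List.getLast?_singleton, Option.some.injEq] at hhead hlast
          rw [hhead] at hlast
          have h5 := congrArg Prod.snd hlast
          simp at h5
        · exact h2
      obtain ⟨hd, tl, hdl⟩ : ∃ hd tl, L.dropLast = hd :: tl := by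
        rcases h : L.dropLast with _ | ⟨hd, tl⟩
        · exfalso
          have := congrArg List.length h
          simp [List.length_dropLast] at this
          omega
        · exact ⟨hd, tl, rfl⟩
      have hhd : hd = ℓ := by
        have h2 := List.head?_dropLast (xs := L)
        rw [hdl, if_pos (by omega), hhead] at h2
        symm
        simpa using h2.symm
      rw [hnormc, reduce_cons_of_cancel' _ hd (hM.trans (by rw [hdl])) (by simp [hhd])]
      have htl : tl.length = L.length - 2 := by
        have := congrArg List.length hdl
        simp [List.length_dropLast] at this
        omega
      rw [if_pos hhead, if_pos hlast, htl, hnorm]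
      rw [Nat.cast_sub hlen2]
      push_cast
      ring
    · -- only last cancels
      rw [hnormc, reduce_cons_of_not_cancel' _ hM ?_]
      · rw [if_neg hhead, if_pos hlast, hnorm]
        simp only [List.length_cons, List.length_dropLast]
        have h6 : L.length - 1 + 1 = L.length := by omega
        rw [h6]
        ring
      · intro hd hhd hcon
        apply hhead
        have h1 := List.head?_dropLast (xs := L)
        rcases h : L.dropLast with _ | ⟨hd', tl⟩
        · rw [h] at hhd; simp at hhd
        · rw [h] at h1 hhd
          have hlen2 : 2 ≤ L.length := by
            have := congrArg List.length h
            simp [List.length_dropLast] at this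
            omega
          rw [if_pos (by omega)] at h1
          simp only [List.head?_cons] at h1
          obtain rfl : hd' = hd := by simpa using hhd
          rw [← h1]
          congr 1
          obtain ⟨c1, c2⟩ := hcon
          have hc1 : ℓ.1 = hd'.1 := c1
          have hc2 : (!ℓ.2) = !hd'.2 := c2
          ext
          · exact hc1.symm
          · exact (by cases hx : ℓ.2 <;> cases hy : hd'.2 <;> simp_all : hd'.2 = ℓ.2)
  · have hM : reduce (L ++ [ℓ]) = L ++ [ℓ] := by
      apply reduce_concat_ne _ hred
      simpa using hlast
    by_cases hhead : L.head? = some ℓ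
    · obtain ⟨hd, tl, hLeq⟩ := List.exists_cons_of_ne_nil hne
      have hdℓ : hd = ℓ := by rw [hLeq] at hhead; simpa using hhead
      subst hdℓ
      rw [hLeq, List.cons_append] at hM
      rw [hLeq] at hhead hlast
      rw [hnormc, hLeq, List.cons_append, reduce_cons_of_cancel' _ hd hM (by simp)]
      rw [if_pos hhead, if_neg hlast, hnorm]
      have h7 : (tl ++ [hd]).length = tl.length + 1 := by simp
      have h8 : L.length = tl.length + 1 := by rw [hLeq]; simp
      rw [h7, h8]
      push_cast
      ring
    · rw [hnormc, reduce_cons_of_not_cancel' _ hM ?_]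
      · rw [if_neg hhead, if_neg hlast, hnorm]
        simp only [List.length_cons, List.length_append, List.length_singleton,
          List.length_nil]
        push_cast
        ring
      · intro hd hhd hcon
        rcases h : L.head? with _ | hd'
        · exact absurd (List.head?_eq_none_iff.mp h) hne
        · rw [List.head?_append, h] at hhd
          have hhd' : hd' = hd := by simpa using hhd
          subst hhd'
          apply hhead
          rw [h]
          congr 1
          obtain ⟨c1, c2⟩ := hcon
          have hc1 : ℓ.1 = hd'.1 := c1
          have hc2 : (!ℓ.2) = !hd'.2 := c2
          ext
          · exact hc1.symm
          · exact (by cases hx : ℓ.2 <;> cases hy : hd'.2 <;> simp_all : hd'.2 = ℓ.2)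

end FreeGroup

/-- The free group of rank 2. -/
abbrev F2 := FreeGroup Bool

namespace F2Gen

/-- The generator `a`. -/
def a : F2 := FreeGroup.of true

/-- The generator `b`. -/
def b : F2 := FreeGroup.of false

end F2Gen

open F2Gen

/-- The standard generating set `S_α = {a, a⁻¹, b, b⁻¹}` of `F₂`. -/
def Sα : Set F2 := {a, a⁻¹, b, b⁻¹}


section MainAux

open FreeGroup

lemma mk_singleton_mem_Sα (ℓ : Bool × Bool) : FreeGroup.mk [ℓ] ∈ Sα := by
  rcases ℓ with ⟨x, c⟩
  have ha : a = FreeGroup.mk [((true : Bool), true)] := rfl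
  have hb : b = FreeGroup.mk [((false : Bool), true)] := rfl
  have ha' : a⁻¹ = FreeGroup.mk [((true : Bool), false)] := by rw [ha, FreeGroup.inv_mk]; rfl
  have hb' : b⁻¹ = FreeGroup.mk [((false : Bool), false)] := by rw [hb, FreeGroup.inv_mk]; rfl
  cases x <;> cases c
  · rw [← hb']; simp [Sα]
  · rw [← hb]; simp [Sα]
  · rw [← ha']; simp [Sα]
  · rw [← ha]; simp [Sα]

lemma mk_sing_ne {p q : Bool × Bool} (hpq : p ≠ q) :
    FreeGroup.mk [p] ≠ FreeGroup.mk [q] := by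
  intro hmk
  apply hpq
  have h2 := congrArg FreeGroup.toWord hmk
  rw [FreeGroup.toWord_mk, FreeGroup.toWord_mk, FreeGroup.reduce_singleton,
    FreeGroup.reduce_singleton] at h2
  simpa using h2

lemma prod_map_mk : ∀ W : List (Bool × Bool),
    (W.map fun p => FreeGroup.mk [p]).prod = FreeGroup.mk W
  | [] => by
    simp only [List.map_nil, List.prod_nil]
    have : FreeGroup.mk ([] : List (Bool × Bool)) = FreeGroup.mk (FreeGroup.toWord 1) := rfl
    rw [this, FreeGroup.mk_toWord]
  | p :: W => by
    rw [List.map_cons, List.prod_cons, prod_map_mk W, FreeGroup.mul_mk]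
    rfl

lemma norm_mem_Sα {x : F2} (hx : x ∈ Sα) : FreeGroup.norm x = 1 := by
  rcases hx with rfl | rfl | rfl | rfl
  · exact FreeGroup.norm_of true
  · rw [FreeGroup.norm_inv_eq]; exact FreeGroup.norm_of true
  · exact FreeGroup.norm_of false
  · rw [FreeGroup.norm_inv_eq]; exact FreeGroup.norm_of false

lemma sAlpha_norm_prod_le : ∀ l : List F2, (∀ x ∈ l, x ∈ Sα) → FreeGroup.norm l.prod ≤ l.length := by
  intro l
  induction l with
  | nil => intro _; simp [FreeGroup.norm_one]
  | cons x t ih =>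
    intro h
    rw [List.prod_cons]
    calc FreeGroup.norm (x * t.prod) ≤ FreeGroup.norm x + FreeGroup.norm t.prod :=
        FreeGroup.norm_mul_le _ _
      _ ≤ 1 + t.length := by
        have h1 : FreeGroup.norm x = 1 := norm_mem_Sα (h x List.mem_cons_self)
        have h2 := ih (fun y hy => h y (List.mem_cons_of_mem _ hy))
        omega
      _ = (x :: t).length := by simp [List.length_cons]; omega

lemma wlen_eq_norm (g : F2) : wlen Sα g = FreeGroup.norm g := by
  have hwit : FreeGroup.norm g ∈
      {n | ∃ l : List F2, (∀ x ∈ l, x ∈ Sα) ∧ l.length = n ∧ l.prod = g} := by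
    refine ⟨g.toWord.map (fun p => FreeGroup.mk [p]), ?_, ?_, ?_⟩
    · intro x hx
      obtain ⟨p, _, rfl⟩ := List.mem_map.mp hx
      exact mk_singleton_mem_Sα p
    · rw [List.length_map]; rfl
    · rw [prod_map_mk]; exact FreeGroup.mk_toWord
  apply le_antisymm
  · exact Nat.sInf_le hwit
  · obtain ⟨l, hl, hlen, hprod⟩ := Nat.sInf_mem (⟨_, hwit⟩ : Set.Nonempty _)
    calc FreeGroup.norm g = FreeGroup.norm l.prod := by rw [hprod]
      _ ≤ l.length := sAlpha_norm_prod_le l hl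
      _ = wlen Sα g := hlen

end MainAux

/-- With respect to `S_α`, every non-identity element of `F₂` has curvature `−1/|g|`. -/
theorem f2_standard_curvature (g : F2) (hg : g ≠ 1) :
    kappa Sα g = -1 / (wlen Sα g : ℝ) := by
  have hS : Sα = (({a, a⁻¹, b, b⁻¹} : Finset F2) : Set F2) := by
    ext x; simp [Sα]
  have ha : a = FreeGroup.mk [((true : Bool), true)] := rfl
  have hb : b = FreeGroup.mk [((false : Bool), true)] := rfl
  have ha' : a⁻¹ = FreeGroup.mk [((true : Bool), false)] := by rw [ha, FreeGroup.inv_mk]; rfl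
  have hb' : b⁻¹ = FreeGroup.mk [((false : Bool), false)] := by rw [hb, FreeGroup.inv_mk]; rfl
  have n12 : a ≠ a⁻¹ := by rw [ha', ha]; exact mk_sing_ne (by decide)
  have n13 : a ≠ b := by rw [ha, hb]; exact mk_sing_ne (by decide)
  have n14 : a ≠ b⁻¹ := by rw [hb', ha]; exact mk_sing_ne (by decide)
  have n23 : a⁻¹ ≠ b := by rw [ha', hb]; exact mk_sing_ne (by decide)
  have n24 : a⁻¹ ≠ b⁻¹ := by rw [hb', ha']; exact mk_sing_ne (by decide)
  have n34 : b ≠ b⁻¹ := by rw [hb', hb]; exact mk_sing_ne (by decide)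
  have hcardN : Sα.ncard = 4 := by
    rw [hS, Set.ncard_coe_finset]
    rw [show ({a, a⁻¹, b, b⁻¹} : Finset F2)
        = insert a (insert a⁻¹ (insert b ({b⁻¹} : Finset F2))) from rfl]
    rw [Finset.card_insert_of_notMem (by simp [n12, n13, n14]),
      Finset.card_insert_of_notMem (by simp [n23, n24]),
      Finset.card_insert_of_notMem (by simp [n34]), Finset.card_singleton]
  have key : ∀ ℓ : Bool × Bool,
      ((FreeGroup.norm ((FreeGroup.mk [ℓ])⁻¹ * g * FreeGroup.mk [ℓ]) : ℕ) : ℝ) =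
        (FreeGroup.norm g : ℝ) + 2 - (if g.toWord.head? = some ℓ then 2 else 0)
          - (if g.toWord.getLast? = some (ℓ.1, !ℓ.2) then 2 else 0) :=
    fun ℓ => FreeGroup.norm_conj ℓ g hg
  have k1 := key (true, true)
  have k2 := key (true, false)
  have k3 := key (false, true)
  have k4 := key (false, false)
  rw [← ha] at k1
  rw [← ha'] at k2
  rw [← hb] at k3
  rw [← hb'] at k4
  simp only [inv_inv] at k2 k4
  have hne : g.toWord ≠ [] := by simpa [FreeGroup.toWord_eq_nil_iff] using hg
  obtain ⟨h, hh⟩ : ∃ h, g.toWord.head? = some h := by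
    cases hc : g.toWord.head? with
    | none => exact absurd (List.head?_eq_none_iff.mp hc) hne
    | some h => exact ⟨h, rfl⟩
  obtain ⟨t, ht⟩ : ∃ t, g.toWord.getLast? = some t := by
    cases hc : g.toWord.getLast? with
    | none => exact absurd (List.getLast?_eq_none_iff.mp hc) hne
    | some t => exact ⟨t, rfl⟩
  rw [hh, ht] at k1 k2 k3 k4
  have hsum : (∑ᶠ s ∈ Sα, ((wlen Sα (s⁻¹ * g * s) : ℕ) : ℝ))
      = 4 * (FreeGroup.norm g : ℝ) + 4 := by
    rw [finsum_mem_congr hS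
      (fun x _ => by rw [wlen_eq_norm] :
        ∀ x ∈ (({a, a⁻¹, b, b⁻¹} : Finset F2) : Set F2),
          ((wlen Sα (x⁻¹ * g * x) : ℕ) : ℝ) = ((FreeGroup.norm (x⁻¹ * g * x) : ℕ) : ℝ))]
    rw [finsum_mem_coe_finset]
    rw [show ({a, a⁻¹, b, b⁻¹} : Finset F2)
        = insert a (insert a⁻¹ (insert b ({b⁻¹} : Finset F2))) from rfl]
    rw [Finset.sum_insert (by simp [n12, n13, n14]),
      Finset.sum_insert (by simp [n23, n24]),
      Finset.sum_insert (by simp [n34]), Finset.sum_singleton]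
    simp only [inv_inv]
    rw [k1, k2, k3, k4]
    obtain ⟨h1, h2⟩ := h
    obtain ⟨t1, t2⟩ := t
    cases h1 <;> cases h2 <;> cases t1 <;> cases t2 <;>
      simp <;> ring
  have hnz : FreeGroup.norm g ≠ 0 := fun h0 => hg (FreeGroup.norm_eq_zero.mp h0)
  have hnzR : (FreeGroup.norm g : ℝ) ≠ 0 := Nat.cast_ne_zero.mpr hnz
  have hgen : genCon Sα g = (FreeGroup.norm g : ℝ) + 1 := by
    rw [genCon, hsum, hcardN]
    push_cast
    field_simp
  rw [kappa, hgen, wlen_eq_norm]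
  field_simp
  ring
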